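/- Let X, X′ be i.i.d. random variables on ℝ^m and Y, Y′ be i.i.d. random variables on ℝ^n, with X, X′, Y, Y′ independent where needed, and let μ and ν be symmetric Lévy measures on ℝ^m∖{0} and ℝ^n∖{0} with full support and associated continuous negative definite functions Φ and Ψ. Then, in [0,∞], V²(X,Y) ≤ E[Φ(X − X′)] · E[Ψ(Y − Y′)] ≤ 16 E[Φ(X)] · E[Ψ(Y)]. -/

import Mathlib

open MeasureTheory ProbabilityTheory
open scoped ENNReal RealInnerProductSpace

/-- `ρ` is a Lévy measure on `ℝ^d ∖ {0}`: it does not charge the origin and integrates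
`1 ∧ |r|²`. -/
def IsLevyMeasure {d : ℕ} (ρ : Measure (EuclideanSpace ℝ (Fin d))) : Prop :=
  ρ {0} = 0 ∧ ∫⁻ r, ENNReal.ofReal (min 1 (‖r‖ ^ 2)) ∂ρ < ∞

/-- `ρ` is symmetric: `ρ(B) = ρ(-B)` for all Borel sets `B`. -/
def IsSymmetricMeasure {d : ℕ} (ρ : Measure (EuclideanSpace ℝ (Fin d))) : Prop :=
  ρ.map (fun r => -r) = ρ

/-- `ρ` has full (topological) support on `ℝ^d ∖ {0}`. -/
def HasFullSupportOffZero {d : ℕ} (ρ : Measure (EuclideanSpace ℝ (Fin d))) : Prop :=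
  ∀ G : Set (EuclideanSpace ℝ (Fin d)), IsOpen G → G.Nonempty →
    (0 : EuclideanSpace ℝ (Fin d)) ∉ G → 0 < ρ G

/-- The real-valued continuous negative definite function
`Θ(u) = ∫ (1 - cos ⟪u, r⟫) ρ(dr)` associated to `ρ`, with values in `[0,∞]`. -/
noncomputable def levyCndf {d : ℕ} (ρ : Measure (EuclideanSpace ℝ (Fin d)))
    (u : EuclideanSpace ℝ (Fin d)) : ℝ≥0∞ :=
  ∫⁻ r, ENNReal.ofReal (1 - Real.cos ⟪u, r⟫) ∂ρ

/-- The characteristic function `f_U(r) = E[exp(i ⟪r, U⟫)]` of a random variable `U`. -/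
noncomputable def charFn {d : ℕ} {Ω : Type*} [MeasurableSpace Ω] (P : Measure Ω)
    (U : Ω → EuclideanSpace ℝ (Fin d)) (r : EuclideanSpace ℝ (Fin d)) : ℂ :=
  ∫ ω, Complex.exp (Complex.I * (⟪r, U ω⟫ : ℝ)) ∂P

/-- The joint characteristic function `f_{(X,Y)}(s,t) = E[exp(i(⟪s,X⟫ + ⟪t,Y⟫))]`. -/
noncomputable def jointCharFn {m n : ℕ} {Ω : Type*} [MeasurableSpace Ω] (P : Measure Ω)
    (X : Ω → EuclideanSpace ℝ (Fin m)) (Y : Ω → EuclideanSpace ℝ (Fin n))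
    (s : EuclideanSpace ℝ (Fin m)) (t : EuclideanSpace ℝ (Fin n)) : ℂ :=
  ∫ ω, Complex.exp (Complex.I * ((⟪s, X ω⟫ + ⟪t, Y ω⟫ : ℝ))) ∂P

/-- The generalized distance covariance
`V²(X,Y) = ∬ |f_{(X,Y)}(s,t) - f_X(s) f_Y(t)|² μ(ds) ν(dt)`, with values in `[0,∞]`. -/
noncomputable def gdCov {m n : ℕ} (μ : Measure (EuclideanSpace ℝ (Fin m)))
    (ν : Measure (EuclideanSpace ℝ (Fin n))) {Ω : Type*} [MeasurableSpace Ω]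
    (P : Measure Ω) (X : Ω → EuclideanSpace ℝ (Fin m))
    (Y : Ω → EuclideanSpace ℝ (Fin n)) : ℝ≥0∞ :=
  ∫⁻ s, ∫⁻ t,
    (‖jointCharFn P X Y s t - charFn P X s * charFn P Y t‖₊ : ℝ≥0∞) ^ 2 ∂ν ∂μ

/-! ### Auxiliary lemmas -/

section Aux

variable {Ω : Type*} [MeasurableSpace Ω]

/-- The elementary trigonometric inequality `1 - cos (α - β) ≤ 2(1 - cos α) + 2(1 - cos β)`. -/
lemma gdCov_aux_cos_bound (α β : ℝ) :
    1 - Real.cos (α - β) ≤ 2*(1-Real.cos α) + 2*(1-Real.cos β) := by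
  have ha := Real.sin_sq_add_cos_sq α
  have hb := Real.sin_sq_add_cos_sq β
  rw [Real.cos_sub]
  nlinarith [sq_nonneg (Real.sin α + Real.sin β), sq_nonneg (Real.cos α + Real.cos β - 2)]

lemma gdCov_aux_ofReal_cos_bound (α β : ℝ) :
    ENNReal.ofReal (1 - Real.cos (α - β))
      ≤ 2 * ENNReal.ofReal (1 - Real.cos α) + 2 * ENNReal.ofReal (1 - Real.cos β) := by
  have h1 : (0:ℝ) ≤ 1 - Real.cos α := by nlinarith [Real.cos_le_one α]
  have h2 : (0:ℝ) ≤ 1 - Real.cos β := by nlinarith [Real.cos_le_one β]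
  calc ENNReal.ofReal (1 - Real.cos (α - β))
      ≤ ENNReal.ofReal (2*(1-Real.cos α) + 2*(1-Real.cos β)) :=
        ENNReal.ofReal_le_ofReal (gdCov_aux_cos_bound α β)
    _ = 2 * ENNReal.ofReal (1 - Real.cos α) + 2 * ENNReal.ofReal (1 - Real.cos β) := by
        rw [ENNReal.ofReal_add (by positivity) (by positivity),
          ENNReal.ofReal_mul (by norm_num), ENNReal.ofReal_mul (by norm_num)]
        norm_num

lemma gdCov_aux_measurable_pair {d : ℕ} :
    Measurable fun p : EuclideanSpace ℝ (Fin d) × EuclideanSpace ℝ (Fin d) =>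
      ENNReal.ofReal (1 - Real.cos ⟪p.1, p.2⟫) :=
  (measurable_const.sub
    (Real.measurable_cos.comp (measurable_fst.inner measurable_snd))).ennreal_ofReal

lemma gdCov_aux_measurable_left {d : ℕ} (u : EuclideanSpace ℝ (Fin d)) :
    Measurable fun r : EuclideanSpace ℝ (Fin d) =>
      ENNReal.ofReal (1 - Real.cos ⟪u, r⟫) :=
  (measurable_const.sub
    (Real.measurable_cos.comp (measurable_const.inner measurable_id))).ennreal_ofReal

/-- A Lévy measure is σ-finite. -/
lemma gdCov_aux_sigmaFinite {d : ℕ} {ρ : Measure (EuclideanSpace ℝ (Fin d))}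
    (h : IsLevyMeasure ρ) : SigmaFinite ρ := by
  obtain ⟨h0, hfin⟩ := h
  have hmeas : Measurable fun r : EuclideanSpace ℝ (Fin d) =>
      ENNReal.ofReal (min 1 (‖r‖ ^ 2)) :=
    (measurable_const.min (measurable_norm.pow measurable_const)).ennreal_ofReal
  refine ⟨⟨⟨fun n => {0} ∪ {r | 1/(n+1 : ℝ) ≤ ‖r‖}, fun _ => trivial, fun n => ?_, ?_⟩⟩⟩
  · have hc : (0:ℝ) < min 1 ((1/(n+1:ℝ))^2) := by positivity
    have hsub : {r : EuclideanSpace ℝ (Fin d) | 1/(n+1 : ℝ) ≤ ‖r‖} ⊆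
        {r | ENNReal.ofReal (min 1 ((1/(n+1:ℝ))^2)) ≤ ENNReal.ofReal (min 1 (‖r‖ ^ 2))} := by
      intro r hr
      have h0' : (0:ℝ) ≤ 1/(n+1:ℝ) := by positivity
      exact ENNReal.ofReal_le_ofReal (min_le_min le_rfl (pow_le_pow_left₀ h0' hr 2))
    have hb : ρ {r : EuclideanSpace ℝ (Fin d) | 1/(n+1 : ℝ) ≤ ‖r‖}
        ≤ (∫⁻ r, ENNReal.ofReal (min 1 (‖r‖ ^ 2)) ∂ρ)
            / ENNReal.ofReal (min 1 ((1/(n+1:ℝ))^2)) :=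
      le_trans (measure_mono hsub)
        (meas_ge_le_lintegral_div hmeas.aemeasurable
          (ENNReal.ofReal_pos.2 hc).ne' ENNReal.ofReal_ne_top)
    calc ρ ({0} ∪ {r | 1/(n+1 : ℝ) ≤ ‖r‖}) ≤ ρ {0} + ρ {r | 1/(n+1 : ℝ) ≤ ‖r‖} :=
          measure_union_le _ _
      _ < ∞ := by
          rw [h0, zero_add]
          exact lt_of_le_of_lt hb
            (ENNReal.div_lt_top hfin.ne (ENNReal.ofReal_pos.2 hc).ne')
  · ext r
    simp only [Set.mem_iUnion, Set.mem_union, Set.mem_singleton_iff, Set.mem_setOf_eq,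
      Set.mem_univ, iff_true]
    by_cases hr : r = 0
    · exact ⟨0, Or.inl hr⟩
    · obtain ⟨n, hn⟩ := exists_nat_one_div_lt (norm_pos_iff.2 hr)
      exact ⟨n, Or.inr hn.le⟩

lemma gdCov_aux_measurable_levyCndf {d : ℕ} (ρ : Measure (EuclideanSpace ℝ (Fin d)))
    [SFinite ρ] : Measurable (levyCndf ρ) := by
  unfold levyCndf
  exact Measurable.lintegral_prod_right' gdCov_aux_measurable_pair

lemma gdCov_aux_levyCndf_sub_le {d : ℕ} (ρ : Measure (EuclideanSpace ℝ (Fin d)))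
    (u v : EuclideanSpace ℝ (Fin d)) :
    levyCndf ρ (u - v) ≤ 2 * levyCndf ρ u + 2 * levyCndf ρ v := by
  unfold levyCndf
  calc ∫⁻ r, ENNReal.ofReal (1 - Real.cos ⟪u - v, r⟫) ∂ρ
      ≤ ∫⁻ r, (2 * ENNReal.ofReal (1 - Real.cos ⟪u, r⟫)
          + 2 * ENNReal.ofReal (1 - Real.cos ⟪v, r⟫)) ∂ρ := by
        refine lintegral_mono fun r => ?_
        rw [inner_sub_left]
        exact gdCov_aux_ofReal_cos_bound _ _
    _ = 2 * (∫⁻ r, ENNReal.ofReal (1 - Real.cos ⟪u, r⟫) ∂ρ)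
          + 2 * ∫⁻ r, ENNReal.ofReal (1 - Real.cos ⟪v, r⟫) ∂ρ := by
        rw [lintegral_add_left ((gdCov_aux_measurable_left u).const_mul 2),
          lintegral_const_mul 2 (gdCov_aux_measurable_left u),
          lintegral_const_mul 2 (gdCov_aux_measurable_left v)]

lemma gdCov_aux_integrable_of_bdd {P : Measure Ω} [IsProbabilityMeasure P] {f : Ω → ℂ} (C : ℝ)
    (hf : AEStronglyMeasurable f P) (h : ∀ ω, ‖f ω‖ ≤ C) : Integrable f P :=
  Integrable.mono' (integrable_const C) hf (Filter.Eventually.of_forall h)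

lemma gdCov_aux_lintegral_sq_dist (P : Measure Ω) [IsProbabilityMeasure P] (U : Ω → ℂ)
    (hU : AEStronglyMeasurable U P) (hnorm : ∀ ω, ‖U ω‖ = 1) :
    ∫⁻ ω, (‖U ω - ∫ ω', U ω' ∂P‖₊ : ℝ≥0∞) ^ 2 ∂P
      = ENNReal.ofReal (1 - ‖∫ ω, U ω ∂P‖ ^ 2) := by
  set a := ∫ ω, U ω ∂P with ha
  have intU : Integrable U P := gdCov_aux_integrable_of_bdd 1 hU (fun ω => (hnorm ω).le)
  have hna : ‖a‖ ≤ 1 := by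
    calc ‖a‖ ≤ ∫ ω, ‖U ω‖ ∂P := norm_integral_le_integral_norm U
      _ = 1 := by simp [hnorm]
  have expand : ∀ ω, ‖U ω - a‖ ^ 2 = 1 + ‖a‖ ^ 2 - 2 * (U ω * (starRingEnd ℂ) a).re := by
    intro ω
    have h1 : ‖U ω - a‖ ^ 2 = Complex.normSq (U ω - a) := by
      rw [Complex.sq_norm]
    have h2 : Complex.normSq (U ω) = 1 := by
      have := hnorm ω
      rw [← Complex.sq_norm, this]; norm_num
    have h3 : Complex.normSq a = ‖a‖ ^ 2 := by rw [Complex.sq_norm]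
    rw [h1, Complex.normSq_sub, h2, h3]
  have asm : AEStronglyMeasurable (fun ω => ‖U ω - a‖ ^ 2) P :=
    ((hU.sub aestronglyMeasurable_const).norm.pow 2)
  have hint : Integrable (fun ω => ‖U ω - a‖ ^ 2) P := by
    refine Integrable.mono' (integrable_const 4) asm (Filter.Eventually.of_forall fun ω => ?_)
    have h4 : ‖U ω - a‖ ≤ 2 := by
      calc ‖U ω - a‖ ≤ ‖U ω‖ + ‖a‖ := norm_sub_le _ _
        _ ≤ 2 := by rw [hnorm ω]; linarith
    have h5 : (0:ℝ) ≤ ‖U ω - a‖ := norm_nonneg _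
    rw [Real.norm_eq_abs, _root_.abs_of_nonneg (by positivity)]
    nlinarith
  have intre : Integrable (fun ω => (U ω * (starRingEnd ℂ) a).re) P := by
    simpa only [RCLike.re_to_complex] using (intU.mul_const ((starRingEnd ℂ) a)).re
  have hre : ∫ ω, (U ω * (starRingEnd ℂ) a).re ∂P = ‖a‖ ^ 2 := by
    have h6 : ∫ ω, U ω * (starRingEnd ℂ) a ∂P = a * (starRingEnd ℂ) a :=
      integral_mul_const _ U
    have h7 := integral_re (μ := P) (intU.mul_const ((starRingEnd ℂ) a))
    simp only [RCLike.re_to_complex] at h7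
    rw [h7, h6, Complex.mul_conj]
    simp [Complex.normSq_eq_norm_sq]
    exact_mod_cast Complex.ofReal_re (‖a‖ ^ (2:ℕ))
  have hval : ∫ ω, ‖U ω - a‖ ^ 2 ∂P = 1 - ‖a‖ ^ 2 := by
    calc ∫ ω, ‖U ω - a‖ ^ 2 ∂P
        = ∫ ω, (1 + ‖a‖ ^ 2 - 2 * (U ω * (starRingEnd ℂ) a).re) ∂P :=
          integral_congr_ae (Filter.Eventually.of_forall fun ω => expand ω)
      _ = (1 + ‖a‖^2) - 2 * ∫ ω, (U ω * (starRingEnd ℂ) a).re ∂P := by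
          rw [integral_sub (integrable_const _) (intre.const_mul 2)]
          rw [integral_const]
          simp [integral_const_mul]
      _ = 1 - ‖a‖ ^ 2 := by rw [hre]; ring
  have key : ∀ ω, (‖U ω - a‖₊ : ℝ≥0∞) ^ 2 = ENNReal.ofReal (‖U ω - a‖ ^ 2) := by
    intro ω
    rw [← enorm_eq_nnnorm, ← ofReal_norm, ← ENNReal.ofReal_pow (norm_nonneg _)]
  simp_rw [key]
  rw [← ofReal_integral_eq_lintegral_ofReal hint
    (Filter.Eventually.of_forall fun ω => sq_nonneg _), hval]

lemma gdCov_aux_cov_sq_le (P : Measure Ω) [IsProbabilityMeasure P] (U V : Ω → ℂ)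
    (hU : AEStronglyMeasurable U P) (hV : AEStronglyMeasurable V P)
    (hUn : ∀ ω, ‖U ω‖ = 1) (hVn : ∀ ω, ‖V ω‖ = 1) :
    (‖(∫ ω, U ω * V ω ∂P) - (∫ ω, U ω ∂P) * ∫ ω, V ω ∂P‖₊ : ℝ≥0∞) ^ 2
      ≤ (∫⁻ ω, (‖U ω - ∫ ω', U ω' ∂P‖₊ : ℝ≥0∞) ^ 2 ∂P)
        * ∫⁻ ω, (‖V ω - ∫ ω', V ω' ∂P‖₊ : ℝ≥0∞) ^ 2 ∂P := by
  set a := ∫ ω, U ω ∂P with ha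
  set b := ∫ ω, V ω ∂P with hb
  have intU : Integrable U P := gdCov_aux_integrable_of_bdd 1 hU fun ω => (hUn ω).le
  have intV : Integrable V P := gdCov_aux_integrable_of_bdd 1 hV fun ω => (hVn ω).le
  have intUV : Integrable (fun ω => U ω * V ω) P :=
    gdCov_aux_integrable_of_bdd 1 (hU.mul hV) fun ω => by
      rw [norm_mul, hUn ω, hVn ω]; norm_num
  have hid : (∫ ω, U ω * V ω ∂P) - a * b = ∫ ω, (U ω - a) * (V ω - b) ∂P := by
    have expand : ∀ ω, (U ω - a) * (V ω - b) = U ω * V ω - a * V ω - U ω * b + a * b := by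
      intro ω; ring
    rw [integral_congr_ae (Filter.Eventually.of_forall expand)]
    have i1 : Integrable (fun ω => U ω * V ω - a * V ω) P := intUV.sub (intV.const_mul a)
    have i2 : Integrable (fun ω => U ω * V ω - a * V ω - U ω * b) P := i1.sub (intU.mul_const b)
    rw [integral_add i2 (integrable_const _), integral_sub i1 (intU.mul_const b),
      integral_sub intUV (intV.const_mul a), integral_const_mul, integral_mul_const,
      integral_const]
    simp only [probReal_univ, one_smul]
    ring
  rw [hid]
  have step1 : (‖∫ ω, (U ω - a) * (V ω - b) ∂P‖₊ : ℝ≥0∞)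
      ≤ ∫⁻ ω, (‖U ω - a‖₊ : ℝ≥0∞) * (‖V ω - b‖₊ : ℝ≥0∞) ∂P := by
    refine le_trans (enorm_integral_le_lintegral_enorm _) (le_of_eq ?_)
    refine lintegral_congr fun ω => ?_
    rw [enorm_mul]; rfl
  have hfm : AEMeasurable (fun ω => (‖U ω - a‖₊ : ℝ≥0∞)) P :=
    AEStronglyMeasurable.enorm (hU.sub aestronglyMeasurable_const)
  have hgm : AEMeasurable (fun ω => (‖V ω - b‖₊ : ℝ≥0∞)) P :=
    AEStronglyMeasurable.enorm (hV.sub aestronglyMeasurable_const)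
  have holder := ENNReal.lintegral_mul_le_Lp_mul_Lq P
    Real.HolderConjugate.two_two hfm hgm
  have hsq : ∀ x : ℝ≥0∞, (x ^ (1/2 : ℝ)) ^ (2:ℕ) = x := by
    intro x
    rw [← ENNReal.rpow_natCast (x ^ (1/2:ℝ)) 2, ← ENNReal.rpow_mul]
    norm_num
  have hpow : ∀ y : ℝ≥0∞, y ^ (2:ℝ) = y ^ (2:ℕ) := fun y => by
    rw [show ((2:ℝ)) = ((2:ℕ):ℝ) by norm_num, ENNReal.rpow_natCast]
  calc (‖∫ ω, (U ω - a) * (V ω - b) ∂P‖₊ : ℝ≥0∞) ^ 2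
      ≤ (∫⁻ ω, (‖U ω - a‖₊ : ℝ≥0∞) * (‖V ω - b‖₊ : ℝ≥0∞) ∂P) ^ 2 :=
        pow_le_pow_left₀ (zero_le ..) step1 2
    _ ≤ ((∫⁻ ω, (‖U ω - a‖₊ : ℝ≥0∞) ^ (2:ℝ) ∂P) ^ (1/2:ℝ)
          * (∫⁻ ω, (‖V ω - b‖₊ : ℝ≥0∞) ^ (2:ℝ) ∂P) ^ (1/2:ℝ)) ^ 2 :=
        pow_le_pow_left₀ (zero_le ..) holder 2
    _ = (∫⁻ ω, (‖U ω - a‖₊ : ℝ≥0∞) ^ 2 ∂P) * ∫⁻ ω, (‖V ω - b‖₊ : ℝ≥0∞) ^ 2 ∂P := by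
        rw [mul_pow, hsq, hsq]
        simp_rw [hpow]

lemma gdCov_aux_integral_complex_ofReal {P : Measure Ω} {f : Ω → ℝ} :
    ∫ ω, ((f ω : ℝ) : ℂ) ∂P = ((∫ ω, f ω ∂P : ℝ) : ℂ) := integral_ofReal

lemma gdCov_aux_norm_exp_I_mul (r : ℝ) : ‖Complex.exp (Complex.I * r)‖ = 1 := by
  rw [Complex.norm_exp]
  simp

lemma gdCov_aux_charFn_eq {d : ℕ} (P : Measure Ω) [IsProbabilityMeasure P]
    (X : Ω → EuclideanSpace ℝ (Fin d)) (hX : Measurable X) (s : EuclideanSpace ℝ (Fin d)) :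
    charFn P X s = ((∫ ω, Real.cos ⟪s, X ω⟫ ∂P : ℝ) : ℂ)
      + ((∫ ω, Real.sin ⟪s, X ω⟫ ∂P : ℝ) : ℂ) * Complex.I := by
  unfold charFn
  have hpt : ∀ ω, Complex.exp (Complex.I * (⟪s, X ω⟫ : ℝ))
      = ((Real.cos ⟪s, X ω⟫ : ℝ) : ℂ) + ((Real.sin ⟪s, X ω⟫ : ℝ) : ℂ) * Complex.I := by
    intro ω
    rw [mul_comm, Complex.exp_mul_I, Complex.ofReal_cos, Complex.ofReal_sin]
  have hcm : Measurable fun ω => Real.cos ⟪s, X ω⟫ :=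
    Real.measurable_cos.comp (measurable_const.inner hX)
  have hsm : Measurable fun ω => Real.sin ⟪s, X ω⟫ :=
    Real.measurable_sin.comp (measurable_const.inner hX)
  have intc : Integrable (fun ω => Real.cos ⟪s, X ω⟫) P :=
    Integrable.mono' (integrable_const 1) hcm.aestronglyMeasurable
      (Filter.Eventually.of_forall fun ω => by
        rw [Real.norm_eq_abs]; exact Real.abs_cos_le_one _)
  have ints : Integrable (fun ω => Real.sin ⟪s, X ω⟫) P :=
    Integrable.mono' (integrable_const 1) hsm.aestronglyMeasurable
      (Filter.Eventually.of_forall fun ω => by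
        rw [Real.norm_eq_abs]; exact Real.abs_sin_le_one _)
  have i1 : Integrable (fun ω => ((Real.cos ⟪s, X ω⟫ : ℝ) : ℂ)) P := intc.ofReal
  have i2 : Integrable (fun ω => ((Real.sin ⟪s, X ω⟫ : ℝ) : ℂ) * Complex.I) P :=
    ints.ofReal.mul_const _
  rw [integral_congr_ae (Filter.Eventually.of_forall hpt), integral_add i1 i2,
    integral_mul_const, gdCov_aux_integral_complex_ofReal, gdCov_aux_integral_complex_ofReal]

lemma gdCov_aux_one_sub_norm_charFn {d : ℕ} (P : Measure Ω) [IsProbabilityMeasure P]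
    (X X' : Ω → EuclideanSpace ℝ (Fin d)) (hX : Measurable X) (hX' : Measurable X')
    (hid : IdentDistrib X X' P P) (hind : IndepFun X X' P) (s : EuclideanSpace ℝ (Fin d)) :
    ENNReal.ofReal (1 - ‖charFn P X s‖ ^ 2)
      = ∫⁻ ω, ENNReal.ofReal (1 - Real.cos ⟪s, X ω - X' ω⟫) ∂P := by
  set c := ∫ ω, Real.cos ⟪s, X ω⟫ ∂P with hc
  set d' := ∫ ω, Real.sin ⟪s, X ω⟫ ∂P with hd
  have hφc : Measurable fun x : EuclideanSpace ℝ (Fin d) => Real.cos ⟪s, x⟫ :=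
    Real.measurable_cos.comp (measurable_const.inner measurable_id)
  have hφs : Measurable fun x : EuclideanSpace ℝ (Fin d) => Real.sin ⟪s, x⟫ :=
    Real.measurable_sin.comp (measurable_const.inner measurable_id)
  have hnorm : ‖charFn P X s‖ ^ 2 = c ^ 2 + d' ^ 2 := by
    rw [gdCov_aux_charFn_eq P X hX s, Complex.sq_norm,
      Complex.normSq_add_mul_I]
  have intcXX' : Integrable (fun ω => Real.cos ⟪s, X ω - X' ω⟫) P :=
    Integrable.mono' (integrable_const 1)
      (Real.measurable_cos.comp (measurable_const.inner (hX.sub hX'))).aestronglyMeasurable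
      (Filter.Eventually.of_forall fun ω => by
        rw [Real.norm_eq_abs]; exact Real.abs_cos_le_one _)
  have hcc : IndepFun (fun ω => Real.cos ⟪s, X ω⟫) (fun ω => Real.cos ⟪s, X' ω⟫) P :=
    hind.comp hφc hφc
  have hss : IndepFun (fun ω => Real.sin ⟪s, X ω⟫) (fun ω => Real.sin ⟪s, X' ω⟫) P :=
    hind.comp hφs hφs
  have asm1 : AEStronglyMeasurable (fun ω => Real.cos ⟪s, X ω⟫) P :=
    (Real.measurable_cos.comp (measurable_const.inner hX)).aestronglyMeasurable
  have asm1' : AEStronglyMeasurable (fun ω => Real.cos ⟪s, X' ω⟫) P :=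
    (Real.measurable_cos.comp (measurable_const.inner hX')).aestronglyMeasurable
  have asm2 : AEStronglyMeasurable (fun ω => Real.sin ⟪s, X ω⟫) P :=
    (Real.measurable_sin.comp (measurable_const.inner hX)).aestronglyMeasurable
  have asm2' : AEStronglyMeasurable (fun ω => Real.sin ⟪s, X' ω⟫) P :=
    (Real.measurable_sin.comp (measurable_const.inner hX')).aestronglyMeasurable
  have hcc' : ∫ ω, Real.cos ⟪s, X' ω⟫ ∂P = c := ((hid.comp hφc).integral_eq).symm
  have hss' : ∫ ω, Real.sin ⟪s, X' ω⟫ ∂P = d' := ((hid.comp hφs).integral_eq).symm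
  have intprod1 : Integrable (fun ω => Real.cos ⟪s, X ω⟫ * Real.cos ⟪s, X' ω⟫) P :=
    Integrable.mono' (integrable_const 1) (asm1.mul asm1')
      (Filter.Eventually.of_forall fun ω => by
        rw [Real.norm_eq_abs, abs_mul]
        exact mul_le_one₀ (Real.abs_cos_le_one _) (abs_nonneg _) (Real.abs_cos_le_one _))
  have hcos_diff : ∫ ω, Real.cos ⟪s, X ω - X' ω⟫ ∂P = c ^ 2 + d' ^ 2 := by
    have expand : ∀ ω, Real.cos ⟪s, X ω - X' ω⟫
        = Real.cos ⟪s, X ω⟫ * Real.cos ⟪s, X' ω⟫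
          + Real.sin ⟪s, X ω⟫ * Real.sin ⟪s, X' ω⟫ := by
      intro ω; rw [inner_sub_right, Real.cos_sub]
    have intprod2 : Integrable (fun ω => Real.sin ⟪s, X ω⟫ * Real.sin ⟪s, X' ω⟫) P :=
      Integrable.mono' (integrable_const 1) (asm2.mul asm2')
        (Filter.Eventually.of_forall fun ω => by
          rw [Real.norm_eq_abs, abs_mul]
          exact mul_le_one₀ (Real.abs_sin_le_one _) (abs_nonneg _) (Real.abs_sin_le_one _))
    rw [integral_congr_ae (Filter.Eventually.of_forall expand),
      integral_add intprod1 intprod2, hcc.integral_fun_mul_eq_mul_integral asm1 asm1',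
      hss.integral_fun_mul_eq_mul_integral asm2 asm2', hcc', hss']
    ring
  have hval : ∫ ω, (1 - Real.cos ⟪s, X ω - X' ω⟫) ∂P = 1 - ‖charFn P X s‖ ^ 2 := by
    rw [integral_sub (integrable_const 1) intcXX', integral_const, hcos_diff, hnorm]
    simp
  rw [← hval]
  refine ofReal_integral_eq_lintegral_ofReal ((integrable_const 1).sub intcXX')
    (Filter.Eventually.of_forall fun ω => by
      simp only [Pi.zero_apply]
      have := Real.cos_le_one ⟪s, X ω - X' ω⟫; linarith)

lemma gdCov_aux_pointwise {m n : ℕ} (P : Measure Ω) [IsProbabilityMeasure P]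
    (X X' : Ω → EuclideanSpace ℝ (Fin m)) (Y Y' : Ω → EuclideanSpace ℝ (Fin n))
    (hX : Measurable X) (hX' : Measurable X') (hY : Measurable Y) (hY' : Measurable Y')
    (hidX : IdentDistrib X X' P P) (hindX : IndepFun X X' P)
    (hidY : IdentDistrib Y Y' P P) (hindY : IndepFun Y Y' P)
    (s : EuclideanSpace ℝ (Fin m)) (t : EuclideanSpace ℝ (Fin n)) :
    (‖jointCharFn P X Y s t - charFn P X s * charFn P Y t‖₊ : ℝ≥0∞) ^ 2
      ≤ (∫⁻ ω, ENNReal.ofReal (1 - Real.cos ⟪s, X ω - X' ω⟫) ∂P)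
        * ∫⁻ ω, ENNReal.ofReal (1 - Real.cos ⟪t, Y ω - Y' ω⟫) ∂P := by
  set U : Ω → ℂ := fun ω => Complex.exp (Complex.I * (⟪s, X ω⟫ : ℝ)) with hU
  set V : Ω → ℂ := fun ω => Complex.exp (Complex.I * (⟪t, Y ω⟫ : ℝ)) with hV
  have hUm : AEStronglyMeasurable U P :=
    (Complex.measurable_exp.comp (measurable_const.mul
      (Complex.measurable_ofReal.comp (measurable_const.inner hX)))).aestronglyMeasurable
  have hVm : AEStronglyMeasurable V P :=
    (Complex.measurable_exp.comp (measurable_const.mul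
      (Complex.measurable_ofReal.comp (measurable_const.inner hY)))).aestronglyMeasurable
  have hUn : ∀ ω, ‖U ω‖ = 1 := fun ω => gdCov_aux_norm_exp_I_mul _
  have hVn : ∀ ω, ‖V ω‖ = 1 := fun ω => gdCov_aux_norm_exp_I_mul _
  have hjoint : jointCharFn P X Y s t = ∫ ω, U ω * V ω ∂P := by
    unfold jointCharFn
    refine integral_congr_ae (Filter.Eventually.of_forall fun ω => ?_)
    show Complex.exp (Complex.I * ((⟪s, X ω⟫ + ⟪t, Y ω⟫ : ℝ) : ℂ)) = U ω * V ω
    rw [hU, hV]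
    push_cast
    rw [mul_add, Complex.exp_add]
  have hcU : charFn P X s = ∫ ω, U ω ∂P := rfl
  have hcV : charFn P Y t = ∫ ω, V ω ∂P := rfl
  rw [hjoint, hcU, hcV]
  calc (‖(∫ ω, U ω * V ω ∂P) - (∫ ω, U ω ∂P) * ∫ ω, V ω ∂P‖₊ : ℝ≥0∞) ^ 2
      ≤ (∫⁻ ω, (‖U ω - ∫ ω', U ω' ∂P‖₊ : ℝ≥0∞) ^ 2 ∂P)
        * ∫⁻ ω, (‖V ω - ∫ ω', V ω' ∂P‖₊ : ℝ≥0∞) ^ 2 ∂P :=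
        gdCov_aux_cov_sq_le P U V hUm hVm hUn hVn
    _ = ENNReal.ofReal (1 - ‖charFn P X s‖ ^ 2) * ENNReal.ofReal (1 - ‖charFn P Y t‖ ^ 2) := by
        rw [gdCov_aux_lintegral_sq_dist P U hUm hUn, gdCov_aux_lintegral_sq_dist P V hVm hVn]
        rw [hcU, hcV]
    _ = (∫⁻ ω, ENNReal.ofReal (1 - Real.cos ⟪s, X ω - X' ω⟫) ∂P)
        * ∫⁻ ω, ENNReal.ofReal (1 - Real.cos ⟪t, Y ω - Y' ω⟫) ∂P := by
        rw [gdCov_aux_one_sub_norm_charFn P X X' hX hX' hidX hindX s,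
          gdCov_aux_one_sub_norm_charFn P Y Y' hY hY' hidY hindY t]

end Aux

/-- Let `X, X'` be i.i.d. on `ℝ^m`, `Y, Y'` i.i.d. on `ℝ^n`, and `μ, ν` symmetric Lévy
measures with full support and associated cndfs `Φ, Ψ`. Then, in `[0,∞]`,
`V²(X,Y) ≤ E[Φ(X - X')] · E[Ψ(Y - Y')] ≤ 16 E[Φ(X)] · E[Ψ(Y)]`. -/
theorem gdCov_le_moment_bound {m n : ℕ}
    (μ : Measure (EuclideanSpace ℝ (Fin m))) (ν : Measure (EuclideanSpace ℝ (Fin n)))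
    (hμLevy : IsLevyMeasure μ) (hμsym : IsSymmetricMeasure μ)
    (hμfull : HasFullSupportOffZero μ)
    (hνLevy : IsLevyMeasure ν) (hνsym : IsSymmetricMeasure ν)
    (hνfull : HasFullSupportOffZero ν)
    {Ω : Type*} [MeasurableSpace Ω] (P : Measure Ω) [IsProbabilityMeasure P]
    (X X' : Ω → EuclideanSpace ℝ (Fin m)) (Y Y' : Ω → EuclideanSpace ℝ (Fin n))
    (hX : Measurable X) (hX' : Measurable X') (hY : Measurable Y) (hY' : Measurable Y')
    (hidX : IdentDistrib X X' P P) (hindX : IndepFun X X' P)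
    (hidY : IdentDistrib Y Y' P P) (hindY : IndepFun Y Y' P) :
    gdCov μ ν P X Y
        ≤ (∫⁻ ω, levyCndf μ (X ω - X' ω) ∂P) * (∫⁻ ω, levyCndf ν (Y ω - Y' ω) ∂P) ∧
      (∫⁻ ω, levyCndf μ (X ω - X' ω) ∂P) * (∫⁻ ω, levyCndf ν (Y ω - Y' ω) ∂P)
        ≤ 16 * ((∫⁻ ω, levyCndf μ (X ω) ∂P) * ∫⁻ ω, levyCndf ν (Y ω) ∂P) := by
  haveI : SigmaFinite μ := gdCov_aux_sigmaFinite hμLevy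
  haveI : SigmaFinite ν := gdCov_aux_sigmaFinite hνLevy
  constructor
  · -- first inequality
    have hA_joint : Measurable (fun p : EuclideanSpace ℝ (Fin m) × Ω =>
        ENNReal.ofReal (1 - Real.cos ⟪p.1, X p.2 - X' p.2⟫)) :=
      (measurable_const.sub (Real.measurable_cos.comp
        (measurable_fst.inner
          ((hX.comp measurable_snd).sub (hX'.comp measurable_snd))))).ennreal_ofReal
    have hB_joint : Measurable (fun p : EuclideanSpace ℝ (Fin n) × Ω =>
        ENNReal.ofReal (1 - Real.cos ⟪p.1, Y p.2 - Y' p.2⟫)) :=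
      (measurable_const.sub (Real.measurable_cos.comp
        (measurable_fst.inner
          ((hY.comp measurable_snd).sub (hY'.comp measurable_snd))))).ennreal_ofReal
    have hAmeas : Measurable (fun s : EuclideanSpace ℝ (Fin m) =>
        ∫⁻ ω, ENNReal.ofReal (1 - Real.cos ⟪s, X ω - X' ω⟫) ∂P) :=
      Measurable.lintegral_prod_right' hA_joint
    have hBmeas : Measurable (fun t : EuclideanSpace ℝ (Fin n) =>
        ∫⁻ ω, ENNReal.ofReal (1 - Real.cos ⟪t, Y ω - Y' ω⟫) ∂P) :=
      Measurable.lintegral_prod_right' hB_joint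
    have swapA : ∫⁻ s, ∫⁻ ω, ENNReal.ofReal (1 - Real.cos ⟪s, X ω - X' ω⟫) ∂P ∂μ
        = ∫⁻ ω, levyCndf μ (X ω - X' ω) ∂P := by
      rw [lintegral_lintegral_swap hA_joint.aemeasurable]
      refine lintegral_congr fun ω => ?_
      unfold levyCndf
      refine lintegral_congr fun s => ?_
      rw [real_inner_comm]
    have swapB : ∫⁻ t, ∫⁻ ω, ENNReal.ofReal (1 - Real.cos ⟪t, Y ω - Y' ω⟫) ∂P ∂ν
        = ∫⁻ ω, levyCndf ν (Y ω - Y' ω) ∂P := by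
      rw [lintegral_lintegral_swap hB_joint.aemeasurable]
      refine lintegral_congr fun ω => ?_
      unfold levyCndf
      refine lintegral_congr fun t => ?_
      rw [real_inner_comm]
    calc gdCov μ ν P X Y
        ≤ ∫⁻ s, ∫⁻ t, (∫⁻ ω, ENNReal.ofReal (1 - Real.cos ⟪s, X ω - X' ω⟫) ∂P)
            * (∫⁻ ω, ENNReal.ofReal (1 - Real.cos ⟪t, Y ω - Y' ω⟫) ∂P) ∂ν ∂μ := by
          refine lintegral_mono fun s => lintegral_mono fun t => ?_
          exact gdCov_aux_pointwise P X X' Y Y' hX hX' hY hY' hidX hindX hidY hindY s t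
      _ = ∫⁻ s, (∫⁻ ω, ENNReal.ofReal (1 - Real.cos ⟪s, X ω - X' ω⟫) ∂P)
            * (∫⁻ t, ∫⁻ ω, ENNReal.ofReal (1 - Real.cos ⟪t, Y ω - Y' ω⟫) ∂P ∂ν) ∂μ :=
          lintegral_congr fun s => lintegral_const_mul _ hBmeas
      _ = (∫⁻ s, ∫⁻ ω, ENNReal.ofReal (1 - Real.cos ⟪s, X ω - X' ω⟫) ∂P ∂μ)
            * ∫⁻ t, ∫⁻ ω, ENNReal.ofReal (1 - Real.cos ⟪t, Y ω - Y' ω⟫) ∂P ∂ν :=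
          lintegral_mul_const _ hAmeas
      _ = (∫⁻ ω, levyCndf μ (X ω - X' ω) ∂P) * ∫⁻ ω, levyCndf ν (Y ω - Y' ω) ∂P := by
          rw [swapA, swapB]
  · -- second inequality
    have hΦ : Measurable (levyCndf μ) := gdCov_aux_measurable_levyCndf μ
    have hΨ : Measurable (levyCndf ν) := gdCov_aux_measurable_levyCndf ν
    have hX'eq : ∫⁻ ω, levyCndf μ (X' ω) ∂P = ∫⁻ ω, levyCndf μ (X ω) ∂P := by
      rw [← lintegral_map hΦ hX, ← lintegral_map hΦ hX', hidX.map_eq]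
    have hY'eq : ∫⁻ ω, levyCndf ν (Y' ω) ∂P = ∫⁻ ω, levyCndf ν (Y ω) ∂P := by
      rw [← lintegral_map hΨ hY, ← lintegral_map hΨ hY', hidY.map_eq]
    have h1 : ∫⁻ ω, levyCndf μ (X ω - X' ω) ∂P ≤ 4 * ∫⁻ ω, levyCndf μ (X ω) ∂P := by
      calc ∫⁻ ω, levyCndf μ (X ω - X' ω) ∂P
          ≤ ∫⁻ ω, (2 * levyCndf μ (X ω) + 2 * levyCndf μ (X' ω)) ∂P :=
            lintegral_mono fun ω => gdCov_aux_levyCndf_sub_le μ _ _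
        _ = 2 * (∫⁻ ω, levyCndf μ (X ω) ∂P) + 2 * ∫⁻ ω, levyCndf μ (X' ω) ∂P := by
            have m1 : Measurable fun ω => levyCndf μ (X ω) := hΦ.comp hX
            have m1' : Measurable fun ω => levyCndf μ (X' ω) := hΦ.comp hX'
            rw [lintegral_add_left (m1.const_mul 2),
              lintegral_const_mul 2 m1, lintegral_const_mul 2 m1']
        _ = 4 * ∫⁻ ω, levyCndf μ (X ω) ∂P := by
            rw [hX'eq]; ring
    have h2 : ∫⁻ ω, levyCndf ν (Y ω - Y' ω) ∂P ≤ 4 * ∫⁻ ω, levyCndf ν (Y ω) ∂P := by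
      calc ∫⁻ ω, levyCndf ν (Y ω - Y' ω) ∂P
          ≤ ∫⁻ ω, (2 * levyCndf ν (Y ω) + 2 * levyCndf ν (Y' ω)) ∂P :=
            lintegral_mono fun ω => gdCov_aux_levyCndf_sub_le ν _ _
        _ = 2 * (∫⁻ ω, levyCndf ν (Y ω) ∂P) + 2 * ∫⁻ ω, levyCndf ν (Y' ω) ∂P := by
            have m2 : Measurable fun ω => levyCndf ν (Y ω) := hΨ.comp hY
            have m2' : Measurable fun ω => levyCndf ν (Y' ω) := hΨ.comp hY'
            rw [lintegral_add_left (m2.const_mul 2),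
              lintegral_const_mul 2 m2, lintegral_const_mul 2 m2']
        _ = 4 * ∫⁻ ω, levyCndf ν (Y ω) ∂P := by
            rw [hY'eq]; ring
    calc (∫⁻ ω, levyCndf μ (X ω - X' ω) ∂P) * ∫⁻ ω, levyCndf ν (Y ω - Y' ω) ∂P
        ≤ (4 * ∫⁻ ω, levyCndf μ (X ω) ∂P) * (4 * ∫⁻ ω, levyCndf ν (Y ω) ∂P) :=
          mul_le_mul' h1 h2
      _ = 16 * ((∫⁻ ω, levyCndf μ (X ω) ∂P) * ∫⁻ ω, levyCndf ν (Y ω) ∂P) := by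
          ring
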